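/- Let n ≥ 3, let ζ = (ξ, η) ∈ ℝ × ℝⁿ⁻¹ be nonzero, and let δ > 0. Set C = { (s, y) ∈ ℝ × ℝⁿ⁻¹ : |y| = 1, ξ s + ⟨η, y⟩ = 0, |s| < δ }, viewed as a subset of ℝⁿ. Let B : ℝⁿ → Mₙ(ℝ) satisfy B(−u) = B(u) for all u, with B(u) invertible for every u ∈ C. Let φ ∈ ℝⁿ and let Φ ∈ Mₙ(ℝ) be antisymmetric (Φᵀ = −Φ). If B(u)·φ + Φ·u = 0 for every u ∈ C, then φ = 0 and Φ = 0. -/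

import Mathlib

open Matrix RealInnerProductSpace

lemma key_zero {n : ℕ} (Φ : Matrix (Fin n) (Fin n) ℝ) (hΦ : Φᵀ = -Φ)
    (ν : Fin n → ℝ) (hν : ν ⬝ᵥ ν ≠ 0)
    (hker : ∀ x, ν ⬝ᵥ x = 0 → Φ *ᵥ x = 0) : Φ = 0 := by
  have hskew : ∀ a b : Fin n → ℝ, a ⬝ᵥ (Φ *ᵥ b) = -((Φ *ᵥ a) ⬝ᵥ b) := by
    intro a b
    rw [Matrix.dotProduct_mulVec, ← Matrix.mulVec_transpose, hΦ, Matrix.neg_mulVec,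
      neg_dotProduct]
  have hν0 : ν ⬝ᵥ (Φ *ᵥ ν) = 0 := by
    have h0 := hskew ν ν
    rw [dotProduct_comm (Φ *ᵥ ν) ν] at h0
    linarith
  have hv : Φ *ᵥ ν = 0 := by
    have h1 : Φ *ᵥ (Φ *ᵥ ν) = 0 := hker _ hν0
    have h2 : (Φ *ᵥ ν) ⬝ᵥ (Φ *ᵥ ν) = 0 := by
      rw [hskew, h1, zero_dotProduct, neg_zero]
    exact dotProduct_self_eq_zero.mp h2
  have hall : ∀ x, Φ *ᵥ x = 0 := by
    intro x
    set c : ℝ := (ν ⬝ᵥ x) / (ν ⬝ᵥ ν) with hc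
    have hx : ν ⬝ᵥ (x - c • ν) = 0 := by
      rw [dotProduct_sub, dotProduct_smul, smul_eq_mul, hc]
      field_simp
      ring
    have h1 := hker _ hx
    have : Φ *ᵥ x = Φ *ᵥ (x - c • ν) + c • (Φ *ᵥ ν) := by
      rw [← Matrix.mulVec_smul, ← Matrix.mulVec_add, sub_add_cancel]
    rw [this, h1, hv, smul_zero, add_zero]
  ext i j
  have := congrFun (hall (Pi.single j 1)) i
  simpa using this

lemma exists_unit_orth {m : ℕ} (hm : 2 ≤ m) (η : EuclideanSpace ℝ (Fin m)) :
    ∃ w : EuclideanSpace ℝ (Fin m), ‖w‖ = 1 ∧ ⟪η, w⟫ = 0 := by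
  have hfin : Module.finrank ℝ (EuclideanSpace ℝ (Fin m)) = m := by
    simp [finrank_euclideanSpace]
  by_cases hη : η = 0
  · refine ⟨EuclideanSpace.single ⟨0, by omega⟩ 1, ?_, ?_⟩
    · simp [EuclideanSpace.norm_single]
    · simp [hη]
  · have h1 : Module.finrank ℝ (Submodule.span ℝ {η}) = 1 := finrank_span_singleton hη
    have h2 := Submodule.finrank_add_finrank_orthogonal (𝕜 := ℝ) (Submodule.span ℝ {η})
    have h3 : 0 < Module.finrank ℝ ((Submodule.span ℝ {η})ᗮ) := by omega
    have h4 : (Submodule.span ℝ {η})ᗮ ≠ ⊥ := by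
      intro hbot
      rw [hbot] at h3
      simp at h3
    obtain ⟨w0, hw0mem, hw0⟩ := Submodule.exists_mem_ne_zero_of_ne_bot h4
    refine ⟨(‖w0‖⁻¹ : ℝ) • w0, ?_, ?_⟩
    · rw [norm_smul]
      simp [norm_ne_zero_iff.mpr hw0]
    · rw [inner_smul_right]
      have : ⟪η, w0⟫ = 0 := by
        have := (Submodule.mem_orthogonal _ _).mp hw0mem η (Submodule.mem_span_singleton_self η)
        exact this
      rw [this, mul_zero]

lemma fin_cons_dot {m : ℕ} (a : ℝ) (v : Fin m → ℝ) (x : Fin (m+1) → ℝ) :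
    (Fin.cons a v : Fin (m+1) → ℝ) ⬝ᵥ x = a * x 0 + v ⬝ᵥ Fin.tail x := by
  rw [dotProduct, Fin.sum_univ_succ]
  simp [Fin.tail, dotProduct]

lemma cons_neg' {m : ℕ} (s : ℝ) (y : Fin m → ℝ) :
    (Fin.cons (-s) (fun i => -y i) : Fin (m+1) → ℝ) = -(Fin.cons s y) := by
  funext i
  refine Fin.cases ?_ (fun j => ?_) i <;> simp

lemma cons_smul' {m : ℕ} (c s : ℝ) (y : Fin m → ℝ) :
    (Fin.cons (c * s) (fun i => c * y i) : Fin (m+1) → ℝ) = c • (Fin.cons s y : Fin (m+1) → ℝ) := by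
  funext i
  refine Fin.cases ?_ (fun j => ?_) i <;> simp

lemma cons_sub' {m : ℕ} (s t : ℝ) (y z : Fin m → ℝ) :
    (Fin.cons (s - t) (fun i => y i - z i) : Fin (m+1) → ℝ) = Fin.cons s y - Fin.cons t z := by
  funext i
  refine Fin.cases ?_ (fun j => ?_) i <;> simp

theorem stmt_10 (m : ℕ) (hm : 2 ≤ m)
    (ξ : ℝ) (η : EuclideanSpace ℝ (Fin m)) (hζ : ¬(ξ = 0 ∧ η = 0))
    (δ : ℝ) (hδ : 0 < δ)
    (B : (Fin (m + 1) → ℝ) → Matrix (Fin (m + 1)) (Fin (m + 1)) ℝ)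
    (hBeven : ∀ u, B (-u) = B u)
    (hBinv : ∀ (s : ℝ) (y : EuclideanSpace ℝ (Fin m)),
      ‖y‖ = 1 → ξ * s + ⟪η, y⟫ = 0 → |s| < δ →
        IsUnit (B (Fin.cons s (fun i => y i))))
    (φ : Fin (m + 1) → ℝ)
    (Φ : Matrix (Fin (m + 1)) (Fin (m + 1)) ℝ) (hΦ : Φᵀ = -Φ)
    (h : ∀ (s : ℝ) (y : EuclideanSpace ℝ (Fin m)),
      ‖y‖ = 1 → ξ * s + ⟪η, y⟫ = 0 → |s| < δ →
        B (Fin.cons s (fun i => y i)) *ᵥ φ + Φ *ᵥ (Fin.cons s (fun i => y i)) = 0) :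
    φ = 0 ∧ Φ = 0 := by
  obtain ⟨w, hw1, hw2⟩ := exists_unit_orth hm η
  -- Step 1 : φ = 0
  have hφ : φ = 0 := by
    have hcond : ξ * 0 + ⟪η, w⟫ = 0 := by simp [hw2]
    have habs : |(0:ℝ)| < δ := by simpa using hδ
    have h1 := h 0 w hw1 hcond habs
    have h2 := h (-0) (-w) (by simpa using hw1) (by simp [inner_neg_right, hw2]) (by simpa using hδ)
    have hco : (Fin.cons (-0) (fun i => (-w) i) : Fin (m+1) → ℝ)
        = -(Fin.cons 0 (fun i => w i)) := by
      simpa using cons_neg' 0 (fun i => w i)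
    rw [hco, hBeven, Matrix.mulVec_neg] at h2
    have hB0 : B (Fin.cons 0 (fun i => w i)) *ᵥ φ = 0 := by
      funext i
      have e1 := congrFun h1 i
      have e2 := congrFun h2 i
      simp only [Pi.add_apply, Pi.neg_apply, Pi.zero_apply] at e1 e2
      simp only [Pi.zero_apply]
      linarith
    have hunit := hBinv 0 w hw1 hcond habs
    have hinj := Matrix.mulVec_injective_iff_isUnit.mpr hunit
    apply hinj
    rw [hB0, Matrix.mulVec_zero]
  refine ⟨hφ, ?_⟩
  subst hφ
  -- now Φ *ᵥ u = 0 on C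
  have hC : ∀ (s : ℝ) (y : EuclideanSpace ℝ (Fin m)),
      ‖y‖ = 1 → ξ * s + ⟪η, y⟫ = 0 → |s| < δ →
      Φ *ᵥ (Fin.cons s (fun i => y i)) = 0 := by
    intro s y h1 h2 h3
    have := h s y h1 h2 h3
    rwa [Matrix.mulVec_zero, zero_add] at this
  -- inner product / dot product conversion
  have hdot : ∀ (a b : EuclideanSpace ℝ (Fin m)),
      ⟪a, b⟫ = (fun i => a i) ⬝ᵥ (fun i => b i) := by
    intro a b
    simp [dotProduct, PiLp.inner_apply, RCLike.inner_apply, mul_comm]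
  -- Φ kills (0, z) whenever z ⊥ η
  have hC0 : ∀ z : EuclideanSpace ℝ (Fin m), ⟪η, z⟫ = 0 →
      Φ *ᵥ (Fin.cons 0 (fun i => z i) : Fin (m+1) → ℝ) = 0 := by
    intro z hz
    by_cases hz0 : z = 0
    · subst hz0
      have hzz : (Fin.cons 0 (fun i => (0 : EuclideanSpace ℝ (Fin m)) i) : Fin (m+1) → ℝ) = 0 := by
        funext i
        refine Fin.cases ?_ (fun j => ?_) i <;> simp
      rw [hzz, Matrix.mulVec_zero]
    · have hnz : ‖z‖ ≠ 0 := norm_ne_zero_iff.mpr hz0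
      have h1 : ‖(‖z‖⁻¹ • z : EuclideanSpace ℝ (Fin m))‖ = 1 := by
        rw [norm_smul]
        simp [abs_of_nonneg (norm_nonneg z), hnz]
      have h2 : ξ * 0 + ⟪η, (‖z‖⁻¹ • z : EuclideanSpace ℝ (Fin m))⟫ = 0 := by
        rw [inner_smul_right, hz]
        ring
      have h3 := hC 0 (‖z‖⁻¹ • z) h1 h2 (by simpa using hδ)
      have hid : (Fin.cons 0 (fun i => z i) : Fin (m+1) → ℝ)
          = ‖z‖ • (Fin.cons 0 (fun i => (‖z‖⁻¹ • z : EuclideanSpace ℝ (Fin m)) i) : Fin (m+1) → ℝ) := by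
        funext i
        refine Fin.cases ?_ (fun j => ?_) i <;> simp
        field_simp
      rw [hid, Matrix.mulVec_smul, h3, smul_zero]
  by_cases hη : η = 0
  · -- Case 1 : η = 0
    refine key_zero Φ hΦ (Fin.cons 1 (fun _ => 0)) ?_ ?_
    · rw [fin_cons_dot]
      simp [dotProduct]
    · intro x hx
      have hx0 : x 0 = 0 := by
        rw [fin_cons_dot] at hx
        simpa [dotProduct] using hx
      have hxe : x = (Fin.cons 0 (fun i => (WithLp.toLp 2 (Fin.tail x) : EuclideanSpace ℝ (Fin m)) i) : Fin (m+1) → ℝ) := by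
        funext i
        refine Fin.cases ?_ (fun j => ?_) i <;> simp [hx0, Fin.tail]
      rw [hxe]
      exact hC0 (WithLp.toLp 2 (Fin.tail x)) (by simp [hη])
  by_cases hξ : ξ = 0
  · -- Case 2 : ξ = 0, η ≠ 0
    refine key_zero Φ hΦ (Fin.cons 0 (fun i => η i)) ?_ ?_
    · rw [fin_cons_dot, Fin.tail_cons, zero_mul, zero_add]
      intro hcontra
      apply hη
      have hfz := dotProduct_self_eq_zero.mp hcontra
      ext i
      exact congrFun hfz i
    · -- Φ kills e₀ first
      have he0 : Φ *ᵥ (Fin.cons 1 (fun _ => 0) : Fin (m+1) → ℝ) = 0 := by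
        have ha := hC (δ/2) w hw1 (by rw [hξ]; simp [hw2])
          (by rw [abs_of_pos (by linarith)]; linarith)
        have hb := hC 0 w hw1 (by simp [hw2]) (by simpa using hδ)
        have hdiff : (Fin.cons (δ/2) (fun i => w i) : Fin (m+1) → ℝ) - Fin.cons 0 (fun i => w i)
            = (δ/2) • (Fin.cons 1 (fun _ => 0) : Fin (m+1) → ℝ) := by
          funext i
          refine Fin.cases ?_ (fun j => ?_) i <;> simp
        have hzz : Φ *ᵥ ((δ/2) • (Fin.cons 1 (fun _ => 0) : Fin (m+1) → ℝ)) = 0 := by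
          rw [← hdiff, Matrix.mulVec_sub, ha, hb, sub_zero]
        rw [Matrix.mulVec_smul] at hzz
        rcases smul_eq_zero.mp hzz with h' | h'
        · exact absurd h' (by positivity)
        · exact h'
      intro x hx
      rw [fin_cons_dot, zero_mul, zero_add] at hx
      have hxe : x = (x 0) • (Fin.cons 1 (fun _ => 0) : Fin (m+1) → ℝ)
          + (Fin.cons 0 (fun i => (WithLp.toLp 2 (Fin.tail x) : EuclideanSpace ℝ (Fin m)) i) : Fin (m+1) → ℝ) := by
        funext i
        refine Fin.cases ?_ (fun j => ?_) i <;> simp [Fin.tail]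
      rw [hxe, Matrix.mulVec_add, Matrix.mulVec_smul, he0, smul_zero, zero_add]
      refine hC0 (WithLp.toLp 2 (Fin.tail x)) ?_
      rw [hdot]
      exact hx
  · -- Case 3 : ξ ≠ 0, η ≠ 0
    have hr : (0:ℝ) < ‖η‖ := norm_pos_iff.mpr hη
    have hξ' : (0:ℝ) < |ξ| := abs_pos.mpr hξ
    set r := ‖η‖ with hrdef
    set ε : ℝ := min ((2*r)⁻¹) (δ*|ξ|/(2*r^2)) with hεdef
    have hεpos : 0 < ε := lt_min (by positivity) (by positivity)
    have hε1 : ε ≤ (2*r)⁻¹ := min_le_left _ _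
    have hε2 : ε ≤ δ*|ξ|/(2*r^2) := min_le_right _ _
    have hεr : ε * r ≤ 1/2 := by
      have h5 := mul_le_mul_of_nonneg_right hε1 (le_of_lt hr)
      have h6 : (2*r)⁻¹ * r = 1/2 := by
        field_simp
      linarith
    have hsq : ε^2*r^2 ≤ 1/4 := by nlinarith [hεr, mul_nonneg hεpos.le hr.le]
    set c := Real.sqrt (1 - ε^2*r^2) with hcdef
    have hc2 : c^2 = 1 - ε^2*r^2 := Real.sq_sqrt (by nlinarith)
    have hcpos : 0 ≤ c := Real.sqrt_nonneg _
    set s : ℝ := -(ε*r^2)/ξ with hsdef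
    set y : EuclideanSpace ℝ (Fin m) := ε • η + c • w with hydef
    have hinner_ηy : ⟪η, y⟫ = ε * r^2 := by
      rw [hydef, inner_add_right, real_inner_smul_right, real_inner_smul_right, hw2,
        real_inner_self_eq_norm_sq]
      ring
    have hny : ‖y‖ = 1 := by
      have horth : ⟪(ε • η : EuclideanSpace ℝ (Fin m)), c • w⟫ = 0 := by
        rw [real_inner_smul_left, real_inner_smul_right, hw2]
        ring
      have hns := norm_add_sq_real (ε • η : EuclideanSpace ℝ (Fin m)) (c • w)
      rw [horth] at hns
      rw [norm_smul, norm_smul, hw1, Real.norm_eq_abs, Real.norm_eq_abs,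
        abs_of_pos hεpos, abs_of_nonneg hcpos] at hns
      have hy2 : ‖y‖^2 = 1 := by
        rw [hydef, hns]
        rw [mul_pow, mul_pow]
        rw [← hrdef]
        linarith [hc2]
      have hfact : (‖y‖ - 1) * (‖y‖ + 1) = 0 := by linear_combination hy2
      rcases mul_eq_zero.mp hfact with h' | h'
      · linarith
      · linarith [norm_nonneg y]
    have hcond : ξ*s + ⟪η, y⟫ = 0 := by
      rw [hinner_ηy, hsdef]
      field_simp
      ring
    have habs : |s| < δ := by
      rw [hsdef, abs_div, abs_neg, abs_of_pos (by positivity)]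
      rw [div_lt_iff₀ hξ']
      have h5 : ε*(2*r^2) ≤ δ*|ξ| := (le_div_iff₀ (by positivity)).mp hε2
      nlinarith [mul_pos hδ hξ']
    have hu := hC s y hny hcond habs
    have hw0 := hC 0 w hw1 (by simp [hw2]) (by simpa using hδ)
    have hp : Φ *ᵥ (Fin.cons (-(r^2)/ξ) (fun i => η i) : Fin (m+1) → ℝ) = 0 := by
      have hcomb : (Fin.cons s (fun i => y i) : Fin (m+1) → ℝ)
            - c • (Fin.cons 0 (fun i => w i) : Fin (m+1) → ℝ)
          = ε • (Fin.cons (-(r^2)/ξ) (fun i => η i) : Fin (m+1) → ℝ) := by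
        funext i
        refine Fin.cases ?_ (fun j => ?_) i
        · simp only [Pi.sub_apply, Pi.smul_apply, Fin.cons_zero, smul_eq_mul, hsdef,
            mul_zero, sub_zero]
          ring
        · simp only [Pi.sub_apply, Pi.smul_apply, Fin.cons_succ, smul_eq_mul, hydef]
          simp
      have h6 : Φ *ᵥ (ε • (Fin.cons (-(r^2)/ξ) (fun i => η i) : Fin (m+1) → ℝ)) = 0 := by
        rw [← hcomb, Matrix.mulVec_sub, hu, Matrix.mulVec_smul, hw0, smul_zero, sub_zero]
      rw [Matrix.mulVec_smul] at h6
      rcases smul_eq_zero.mp h6 with h' | h'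
      · exact absurd h' (ne_of_gt hεpos)
      · exact h'
    have hdd : (fun i => η i) ⬝ᵥ (fun i => η i) = r^2 := by
      rw [← hdot, real_inner_self_eq_norm_sq, hrdef]
    refine key_zero Φ hΦ (Fin.cons ξ (fun i => η i)) ?_ ?_
    · rw [fin_cons_dot, Fin.cons_zero, Fin.tail_cons, hdd]
      intro h0
      linarith [mul_self_pos.mpr hξ, sq_nonneg r]
    · intro x hx
      rw [fin_cons_dot] at hx
      set a : ℝ := ((fun i => η i) ⬝ᵥ Fin.tail x) / r^2 with hadef
      have har : a * r^2 = (fun i => η i) ⬝ᵥ Fin.tail x := by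
        rw [hadef]
        field_simp
      have hz' : ⟪η, (WithLp.toLp 2 (fun i => Fin.tail x i - a * η i) : EuclideanSpace ℝ (Fin m))⟫ = 0 := by
        rw [hdot]
        have hexp : (fun i => η i) ⬝ᵥ (fun i => Fin.tail x i - a * η i)
            = (fun i => η i) ⬝ᵥ Fin.tail x - a * ((fun i => η i) ⬝ᵥ (fun i => η i)) := by
          simp only [dotProduct, Finset.mul_sum, ← Finset.sum_sub_distrib]
          congr 1
          funext i
          ring
        rw [hexp, hdd, har]
        ring
      have hdec : x = a • (Fin.cons (-(r^2)/ξ) (fun i => η i) : Fin (m+1) → ℝ)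
          + (Fin.cons 0 (fun i => (WithLp.toLp 2 (fun i => Fin.tail x i - a * η i) : EuclideanSpace ℝ (Fin m)) i) : Fin (m+1) → ℝ) := by
        funext i
        refine Fin.cases ?_ (fun j => ?_) i
        · simp only [Pi.add_apply, Pi.smul_apply, Fin.cons_zero, smul_eq_mul, add_zero]
          have hx0 : ξ * x 0 = -(a*r^2) := by
            rw [har]
            linarith
          field_simp
          linarith
        · simp only [Pi.add_apply, Pi.smul_apply, Fin.cons_succ, smul_eq_mul, Fin.tail, PiLp.toLp_apply]
          ring
      rw [hdec, Matrix.mulVec_add, Matrix.mulVec_smul, hp, smul_zero, zero_add]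
      exact hC0 _ hz'
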